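/- arXiv:2405.05942 — 3 statements merged into one kernel-verified Lean document; each statement's English description precedes it below -/
import Mathlib

section
/- If f is a monotone submodular function on subsets of a finite ground set V with f(∅)=0, c is a positive modular cost function, OPT ⊆ V, o* is an element of OPT with maximum cost, S ⊆ V satisfies c(S) ≤ c(OPT) − c(o*), and v ∈ OPT \ (S ∪ {o*}) maximizes the density f(e|S)/c(e) over all e ∈ OPT \ (S ∪ {o*}), then f(S ∪ {v}) − f(S) ≥ (c(v)/(c(OPT) − c(o*))) · (f(OPT) − f(S ∪ {o*})). -/
open Finset

/-- Telescoping bound from submodularity. -/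
lemma evoSMC_telescope
    {α : Type*} [DecidableEq α]
    (f : Finset α → ℝ) (S : Finset α)
    (hsub : ∀ T : Finset α, S ⊆ T → ∀ x ∉ T,
      f (insert x T) - f T ≤ f (insert x S) - f S) :
    ∀ R T : Finset α, S ⊆ T → Disjoint R T →
      f (T ∪ R) - f T ≤ ∑ e ∈ R, (f (insert e S) - f S) := by
  intro R
  induction R using Finset.induction_on with
  | empty => intro T _ _; simp
  | @insert a R' ha ih =>
    intro T hST hdisj
    have hdisj' : Disjoint R' T := (Finset.disjoint_insert_left.mp hdisj).2
    have haT : a ∉ T := (Finset.disjoint_insert_left.mp hdisj).1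
    have haTR : a ∉ T ∪ R' := by simp [haT, ha]
    have h1 : f (insert a (T ∪ R')) - f (T ∪ R') ≤ f (insert a S) - f S :=
      hsub (T ∪ R') (hST.trans Finset.subset_union_left) a haTR
    have h2 := ih T hST hdisj'
    have : T ∪ insert a R' = insert a (T ∪ R') := by
      ext x; simp [or_comm, or_left_comm]
    rw [this, Finset.sum_insert ha]
    linarith

/-- the greedy density lemma (Lemma 2 / `lem:greedy`). -/
theorem evoSMC_greedy_lemma
    {α : Type*} [Fintype α] [DecidableEq α]
    (f : Finset α → ℝ) (c : α → ℝ)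
    (hmono : ∀ S T : Finset α, S ⊆ T → f S ≤ f T)
    (hsub : ∀ S T : Finset α, S ⊆ T → ∀ x ∉ T,
      f (insert x T) - f T ≤ f (insert x S) - f S)
    (hf0 : f ∅ = 0)
    (hc : ∀ x, 0 < c x)
    (OPT : Finset α) (hOPTne : OPT.Nonempty)
    (ostar : α) (hostar : ostar ∈ OPT)
    (hmaxcost : ∀ e ∈ OPT, c e ≤ c ostar)
    (S : Finset α)
    (hcS : ∑ x ∈ S, c x ≤ (∑ x ∈ OPT, c x) - c ostar)
    (v : α) (hv : v ∈ OPT \ insert ostar S)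
    (hvmax : ∀ e ∈ OPT \ insert ostar S,
      (f (insert e S) - f S) / c e ≤ (f (insert v S) - f S) / c v) :
    f (insert v S) - f S ≥
      (c v / ((∑ x ∈ OPT, c x) - c ostar)) * (f OPT - f (insert ostar S)) := by
  set T : Finset α := insert ostar S with hT
  set R : Finset α := OPT \ T with hR
  set D : ℝ := (∑ x ∈ OPT, c x) - c ostar with hD
  set d : ℝ := (f (insert v S) - f S) / c v with hd
  have hvR : v ∈ R := hv
  have hvne : v ≠ ostar := by
    rcases Finset.mem_sdiff.mp hv with ⟨_, h2⟩
    intro h; exact h2 (h ▸ Finset.mem_insert_self ostar S)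
  -- D = sum over OPT.erase ostar
  have hDsum : D = ∑ x ∈ OPT.erase ostar, c x := by
    rw [hD, Finset.sum_erase_eq_sub hostar]
  have hvOPT : v ∈ OPT := (Finset.mem_sdiff.mp hv).1
  have hDpos : 0 < D := by
    rw [hDsum]
    exact Finset.sum_pos' (fun i _ => (hc i).le)
      ⟨v, Finset.mem_erase.mpr ⟨hvne, hvOPT⟩, hc v⟩
  have hdnonneg : 0 ≤ d := by
    apply div_nonneg _ (hc v).le
    have := hmono S (insert v S) (Finset.subset_insert _ _)
    linarith
  -- each marginal bounded by c e * d
  have hbound : ∀ e ∈ R, f (insert e S) - f S ≤ c e * d := by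
    intro e he
    have := hvmax e he
    have hce := hc e
    calc f (insert e S) - f S = (f (insert e S) - f S) / c e * c e := by
          field_simp
      _ ≤ d * c e := by
          exact mul_le_mul_of_nonneg_right this hce.le
      _ = c e * d := mul_comm _ _
  -- c(R) ≤ D
  have hcR : ∑ e ∈ R, c e ≤ D := by
    rw [hDsum]
    apply Finset.sum_le_sum_of_subset_of_nonneg
    · intro x hx
      rcases Finset.mem_sdiff.mp hx with ⟨h1, h2⟩
      refine Finset.mem_erase.mpr ⟨?_, h1⟩
      intro h; exact h2 (h ▸ Finset.mem_insert_self ostar S)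
    · intro i _ _; exact (hc i).le
  -- telescoping
  have htel : f (T ∪ R) - f T ≤ ∑ e ∈ R, (f (insert e S) - f S) :=
    evoSMC_telescope f S (fun T' hST' x hx => hsub S T' hST' x hx) R T
      (Finset.subset_insert _ _) (Finset.disjoint_left.mpr
        (fun x hx hxT => (Finset.mem_sdiff.mp hx).2 hxT))
  have hsum : ∑ e ∈ R, (f (insert e S) - f S) ≤ (∑ e ∈ R, c e) * d := by
    rw [Finset.sum_mul]
    exact Finset.sum_le_sum (fun e he => hbound e he)
  have hcover : f OPT ≤ f (T ∪ R) := by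
    apply hmono
    intro x hx
    by_cases hxT : x ∈ T
    · exact Finset.mem_union_left _ hxT
    · exact Finset.mem_union_right _ (Finset.mem_sdiff.mpr ⟨hx, hxT⟩)
  have hmain : f OPT - f T ≤ D * d := by
    have h1 : (∑ e ∈ R, c e) * d ≤ D * d :=
      mul_le_mul_of_nonneg_right hcR hdnonneg
    linarith
  have hcvd : f (insert v S) - f S = c v * d := by
    rw [hd, mul_comm, div_mul_cancel₀ _ (hc v).ne']
  rw [hcvd, ge_iff_le]
  rw [div_mul_eq_mul_div, div_le_iff₀ hDpos]
  calc c v * (f OPT - f T) ≤ c v * (D * d) :=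
        mul_le_mul_of_nonneg_left hmain (hc v).le
    _ = c v * d * D := by ring
end

section
/- Let f be monotone submodular with f(∅)=0, c a positive modular cost, OPT ⊆ V, o* ∈ OPT of maximum cost, S ⊆ V with c(S) ≤ c(OPT) − c(o*), and v ∈ OPT \ (S ∪ {o*}) maximizing f(e|S)/c(e). If moreover f(S ∪ {o*}) < f(OPT)/2 and f(S) ≥ (c(S)/(2(c(OPT) − c(o*)))) · f(OPT), then f(S ∪ {v}) ≥ (c(S ∪ {v})/(2(c(OPT) − c(o*)))) · f(OPT). -/
open Finset

/-- inductive step inequality (Case I-2.2 of Lemma 3). -/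
theorem evoSMC_inductive_step
    {α : Type*} [Fintype α] [DecidableEq α]
    (f : Finset α → ℝ) (c : α → ℝ)
    (hmono : ∀ S T : Finset α, S ⊆ T → f S ≤ f T)
    (hsub : ∀ S T : Finset α, S ⊆ T → ∀ x ∉ T,
      f (insert x T) - f T ≤ f (insert x S) - f S)
    (hf0 : f ∅ = 0)
    (hfnn : ∀ S : Finset α, 0 ≤ f S)
    (hc : ∀ x, 0 < c x)
    (OPT : Finset α) (hOPTne : OPT.Nonempty)
    (ostar : α) (hostar : ostar ∈ OPT)
    (hmaxcost : ∀ e ∈ OPT, c e ≤ c ostar)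
    (S : Finset α)
    (hcS : ∑ x ∈ S, c x ≤ (∑ x ∈ OPT, c x) - c ostar)
    (v : α) (hv : v ∈ OPT \ insert ostar S)
    (hvmax : ∀ e ∈ OPT \ insert ostar S,
      (f (insert e S) - f S) / c e ≤ (f (insert v S) - f S) / c v)
    (hhalf : f (insert ostar S) < f OPT / 2)
    (hIH : f S ≥ (∑ x ∈ S, c x) / (2 * ((∑ x ∈ OPT, c x) - c ostar)) * f OPT) :
    f (insert v S) ≥
      (∑ x ∈ insert v S, c x) / (2 * ((∑ x ∈ OPT, c x) - c ostar)) * f OPT := by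
  classical
  set B := (∑ x ∈ OPT, c x) - c ostar with hB
  obtain ⟨hvOPT, hvT⟩ := mem_sdiff.mp hv
  have hvS : v ∉ S := fun h => hvT (mem_insert_of_mem h)
  -- telescoping submodularity claim
  have claim : ∀ A : Finset α, ∀ T : Finset α, S ⊆ T →
      f (A ∪ T) ≤ f T + ∑ e ∈ A, (f (insert e S) - f S) := by
    intro A
    induction A using Finset.induction_on with
    | empty => intro T hST; simp
    | @insert a A ha ih =>
      intro T hST
      rw [insert_union, Finset.sum_insert ha]
      have h1 : f (insert a (A ∪ T)) ≤ f (A ∪ T) + (f (insert a S) - f S) := by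
        by_cases haT : a ∈ A ∪ T
        · rw [Finset.insert_eq_self.mpr haT]
          have := hmono S (insert a S) (subset_insert a S)
          linarith
        · have := hsub S (A ∪ T) (hST.trans subset_union_right) a haT
          linarith
      have h2 := ih T hST
      linarith
  set T := insert ostar S with hT
  have hST : S ⊆ T := subset_insert _ _
  have hkey : f OPT ≤ f T + ∑ e ∈ OPT \ T, (f (insert e S) - f S) := by
    have h1 := claim (OPT \ T) T hST
    have h2 : OPT ⊆ (OPT \ T) ∪ T := by
      intro x hx
      by_cases hxT : x ∈ T
      · exact mem_union_right _ hxT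
      · exact mem_union_left _ (mem_sdiff.mpr ⟨hx, hxT⟩)
    exact (hmono _ _ h2).trans h1
  have mv_nonneg : 0 ≤ f (insert v S) - f S := by
    have := hmono S (insert v S) (subset_insert v S); linarith
  have hcv := hc v
  have hsum_le : ∑ e ∈ OPT \ T, (f (insert e S) - f S)
      ≤ (f (insert v S) - f S) / c v * ∑ e ∈ OPT \ T, c e := by
    rw [Finset.mul_sum]
    apply Finset.sum_le_sum
    intro e he
    have h := hvmax e he
    have hce := hc e
    calc f (insert e S) - f S = (f (insert e S) - f S) / c e * c e := by
          field_simp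
      _ ≤ (f (insert v S) - f S) / c v * c e :=
          mul_le_mul_of_nonneg_right h hce.le
  have hcsum : ∑ e ∈ OPT \ T, c e ≤ B := by
    have hsub' : OPT \ T ⊆ OPT.erase ostar := by
      intro x hx
      obtain ⟨h1, h2⟩ := mem_sdiff.mp hx
      exact mem_erase.mpr ⟨fun h => h2 (h ▸ mem_insert_self _ _), h1⟩
    have := Finset.sum_le_sum_of_subset_of_nonneg hsub' (fun i _ _ => (hc i).le)
    rwa [Finset.sum_erase_eq_sub hostar] at this
  have hBpos : 0 < B :=
    lt_of_lt_of_le hcv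
      (le_trans (Finset.single_le_sum (fun i _ => (hc i).le) hv) hcsum)
  have hq : 0 ≤ (f (insert v S) - f S) / c v := div_nonneg mv_nonneg hcv.le
  have h3 : f OPT / 2 < (f (insert v S) - f S) / c v * B := by
    have := mul_le_mul_of_nonneg_left hcsum hq
    linarith
  have hmv : c v * f OPT ≤ (f (insert v S) - f S) * (2 * B) := by
    have hcvne : c v ≠ 0 := hcv.ne'
    have : (f (insert v S) - f S) / c v * B * c v = (f (insert v S) - f S) * B := by
      field_simp
    nlinarith [mul_le_mul_of_nonneg_right h3.le hcv.le]
  rw [Finset.sum_insert hvS, ge_iff_le, div_mul_eq_mul_div,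
    div_le_iff₀ (by positivity : (0:ℝ) < 2 * B)]
  have hIH' : (∑ x ∈ S, c x) * f OPT ≤ f S * (2 * B) := by
    rw [ge_iff_le, div_mul_eq_mul_div, div_le_iff₀ (by positivity : (0:ℝ) < 2 * B)] at hIH
    exact hIH
  nlinarith [hmv, hIH']
end

section
/- Let f be monotone submodular with f(∅)=0 on finite V, c modular with positive element costs, S ⊆ V, o* ∉ S, and v ∈ OPT \ (S ∪ {o*}) maximizing f(e|S)/c(e) over e ∈ OPT \ (S ∪ {o*}). Then f(OPT) ≤ f(S ∪ {o*}) + (f(v|S)/c(v)) · Σ_{u ∈ OPT \ (S ∪ {o*})} c(u). -/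
open Finset

lemma greedy_aux
    {α : Type*} [DecidableEq α]
    (f : Finset α → ℝ) (S : Finset α)
    (hmono : ∀ S T : Finset α, S ⊆ T → f S ≤ f T)
    (hsub : ∀ S T : Finset α, S ⊆ T → ∀ x ∉ T,
      f (insert x T) - f T ≤ f (insert x S) - f S) :
    ∀ B : Finset α, ∀ T : Finset α, S ⊆ T → (∀ x ∈ B, x ∉ T) →
      f (B ∪ T) ≤ f T + ∑ u ∈ B, (f (insert u S) - f S) := by
  intro B
  induction B using Finset.induction_on with
  | empty => intro T hST _; simp
  | @insert x B hx ih =>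
    intro T hST hBT
    by_cases hxB : x ∈ B ∪ T
    · have : insert x B ∪ T = B ∪ T := by
        rcases Finset.mem_union.mp hxB with h | h
        · rw [Finset.insert_union, Finset.insert_eq_self.mpr (Finset.mem_union_left _ h)]
        · exact absurd h (hBT x (Finset.mem_insert_self x B))
      rw [this, Finset.sum_insert hx]
      have h1 := ih T hST (fun y hy => hBT y (Finset.mem_insert_of_mem hy))
      have h2 : 0 ≤ f (insert x S) - f S := by
        have := hmono S (insert x S) (Finset.subset_insert _ _); linarith
      linarith
    · have heq : insert x B ∪ T = insert x (B ∪ T) := by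
        ext y; simp [Finset.mem_insert, or_assoc]
      have h1 := ih T hST (fun y hy => hBT y (Finset.mem_insert_of_mem hy))
      have h2 := hsub S (B ∪ T) (hST.trans (Finset.subset_union_right)) x hxB
      rw [heq, Finset.sum_insert hx]
      linarith

/-- intermediate bound in the greedy lemma. -/
theorem greedy_intermediate_bound
    {α : Type*} [Fintype α] [DecidableEq α]
    (f : Finset α → ℝ) (c : α → ℝ)
    (hmono : ∀ S T : Finset α, S ⊆ T → f S ≤ f T)
    (hsub : ∀ S T : Finset α, S ⊆ T → ∀ x ∉ T,
      f (insert x T) - f T ≤ f (insert x S) - f S)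
    (hf0 : f ∅ = 0)
    (hfnn : ∀ S : Finset α, 0 ≤ f S)
    (hc : ∀ x, 0 < c x)
    (OPT S : Finset α) (ostar : α) (hostar : ostar ∉ S)
    (v : α) (hv : v ∈ OPT \ insert ostar S)
    (hvmax : ∀ e ∈ OPT \ insert ostar S,
      (f (insert e S) - f S) / c e ≤ (f (insert v S) - f S) / c v) :
    f OPT ≤ f (insert ostar S) +
      ((f (insert v S) - f S) / c v) * ∑ u ∈ OPT \ insert ostar S, c u := by
  set T := insert ostar S
  set B := OPT \ T with hB
  have h1 : f OPT ≤ f (B ∪ T) :=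
    hmono _ _ (fun y hy => by
      by_cases h : y ∈ T
      · exact Finset.mem_union_right _ h
      · exact Finset.mem_union_left _ (Finset.mem_sdiff.mpr ⟨hy, h⟩))
  have h2 := greedy_aux f S hmono hsub B T (Finset.subset_insert _ _)
    (fun x hx => (Finset.mem_sdiff.mp hx).2)
  have h3 : ∑ u ∈ B, (f (insert u S) - f S) ≤
      ((f (insert v S) - f S) / c v) * ∑ u ∈ B, c u := by
    rw [Finset.mul_sum]
    apply Finset.sum_le_sum
    intro u hu
    have := hvmax u hu
    have hcu := hc u
    calc f (insert u S) - f S = ((f (insert u S) - f S) / c u) * c u := by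
          field_simp
      _ ≤ ((f (insert v S) - f S) / c v) * c u :=
          mul_le_mul_of_nonneg_right this hcu.le
  linarith
end
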